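/- Under the hypotheses of the previous kernel estimate (x ∈ I_N(x_k e_k + x_l e_l), 0 ≤ k < l ≤ N−1), for n ≥ 2^N one has ∫_{I_N} |K_n(x − t)| dμ(t) ≤ c · 2^l · 2^k / (n · 2^N) for an absolute constant c. -/

import Mathlib

open Finset

/-- The dyadic group `G = (ℤ/2)^ℕ`. -/
abbrev G := ℕ → ZMod 2

/-- Walsh–Paley functions: `w n x = ∏ k, ((-1)^(x k))^(n_k)` for the binary expansion of `n`. -/
noncomputable def walsh (n : ℕ) (x : G) : ℝ :=
  ∏ k ∈ Finset.range (n + 1), if n.testBit k then (-1 : ℝ) ^ (x k).val else 1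

/-- Walsh–Dirichlet kernels `D m = ∑_{k<m} w k`. -/
noncomputable def dirichlet (m : ℕ) (x : G) : ℝ :=
  ∑ k ∈ Finset.range m, walsh k x

/-- Walsh–Fejér kernels `K n = (1/n) ∑_{k<n} D k`. -/
noncomputable def fejer (n : ℕ) (x : G) : ℝ :=
  (1 / (n : ℝ)) * ∑ k ∈ Finset.range n, dirichlet k x

/-- The cylinder set `I_N = {t : t_0 = ⋯ = t_{N-1} = 0}`. -/
def IN (N : ℕ) : Set G := {t | ∀ j < N, t j = 0}

open MeasureTheory

instance : TopologicalSpace (ZMod 2) := ⊥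
instance : DiscreteTopology (ZMod 2) := ⟨rfl⟩
instance : MeasurableSpace G := borel G
instance : BorelSpace G := ⟨rfl⟩

/-- The normalized Haar measure on the compact group `G`. -/
noncomputable def haarG : Measure G :=
  Measure.addHaarMeasure ⟨⟨Set.univ, isCompact_univ⟩, by simp⟩

lemma walsh_eq_prod {n M : ℕ} (h : n < M) (x : G) :
    walsh n x = ∏ k ∈ Finset.range M, (if n.testBit k then (-1 : ℝ) ^ (x k).val else 1) := by
  unfold walsh
  apply Finset.prod_subset (Finset.range_subset_range.2 h)
  intro i _ hi
  simp only [Finset.mem_range, not_lt] at hi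
  have hb : n.testBit i = false :=
    Nat.testBit_lt_two_pow (lt_of_lt_of_le (Nat.lt_two_pow_self (n := n))
      (Nat.pow_le_pow_right (by norm_num) (by omega)))
  simp [hb]

lemma abs_walsh_le (n : ℕ) (x : G) : |walsh n x| ≤ 1 := by
  unfold walsh
  rw [Finset.abs_prod]
  apply Finset.prod_le_one
  · intro i _; positivity
  · intro i _
    split
    · rw [abs_pow, abs_neg, abs_one, one_pow]
    · simp

lemma walsh_two_pow (s : ℕ) (x : G) : walsh (2 ^ s) x = (-1 : ℝ) ^ (x s).val := by
  unfold walsh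
  rw [Finset.prod_eq_single s]
  · simp [Nat.testBit_two_pow_self]
  · intro i _ his
    have hb : (2 ^ s).testBit i = false := Nat.testBit_two_pow_of_ne (Ne.symm his)
    simp [hb]
  · intro h
    exact absurd (Finset.mem_range.2 (by have := Nat.lt_two_pow_self (n := s); omega)) h

lemma walsh_split {s u r : ℕ} (hr : r < 2 ^ s) (x : G) :
    walsh (2 ^ s * u + r) x = walsh (2 ^ s * u) x * walsh r x := by
  set M := 2 ^ s * u + r + 1 with hM
  rw [walsh_eq_prod (show 2 ^ s * u + r < M by omega) x,
      walsh_eq_prod (show 2 ^ s * u < M by omega) x,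
      walsh_eq_prod (show r < M by omega) x, ← Finset.prod_mul_distrib]
  apply Finset.prod_congr rfl
  intro i _
  rw [Nat.testBit_two_pow_mul_add u hr i]
  by_cases hi : i < s
  · have h1 : (2 ^ s * u).testBit i = false := by
      rw [Nat.testBit_two_pow_mul]
      simp [Nat.not_le.2 hi]
    simp [hi, h1]
  · have h2 : r.testBit i = false :=
      Nat.testBit_lt_two_pow (lt_of_lt_of_le hr (Nat.pow_le_pow_right (by norm_num) (Nat.not_lt.1 hi)))
    have h1 : (2 ^ s * u).testBit i = u.testBit (i - s) := by
      rw [Nat.testBit_two_pow_mul]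
      simp [Nat.not_lt.1 hi]
    simp [hi, h1, h2]

lemma dirichlet_add (A m : ℕ) (x : G) :
    dirichlet (A + m) x = dirichlet A x + ∑ j ∈ Finset.range m, walsh (A + j) x := by
  unfold dirichlet
  rw [Finset.sum_range_add]

lemma dirichlet_split {s : ℕ} (u : ℕ) {r : ℕ} (hr : r ≤ 2 ^ s) (x : G) :
    dirichlet (2 ^ s * u + r) x
      = dirichlet (2 ^ s * u) x + walsh (2 ^ s * u) x * dirichlet r x := by
  rw [dirichlet_add]
  congr 1
  unfold dirichlet
  rw [Finset.mul_sum]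
  apply Finset.sum_congr rfl
  intro j hj
  exact walsh_split (lt_of_lt_of_le (Finset.mem_range.1 hj) hr) x

lemma dirichlet_two_pow_succ {x : G} {k : ℕ} (hk : x k = 1) :
    dirichlet (2 ^ (k + 1)) x = 0 := by
  have h2 : (2 : ℕ) ^ (k + 1) = 2 ^ k * 1 + 2 ^ k := by ring
  rw [h2, dirichlet_split 1 le_rfl x, mul_one, walsh_two_pow, hk]
  have hv : ((1 : ZMod 2)).val = 1 := rfl
  rw [hv]
  ring

lemma dirichlet_two_pow_mul {x : G} {k : ℕ} (hk : x k = 1) (u : ℕ) :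
    dirichlet (2 ^ (k + 1) * u) x = 0 := by
  induction u with
  | zero => simp [dirichlet]
  | succ u ih =>
    have h2 : 2 ^ (k + 1) * (u + 1) = 2 ^ (k + 1) * u + 2 ^ (k + 1) := by ring
    rw [h2, dirichlet_split u le_rfl x, ih, dirichlet_two_pow_succ hk]
    ring

lemma abs_dirichlet_le_self (r : ℕ) (x : G) : |dirichlet r x| ≤ (r : ℝ) := by
  unfold dirichlet
  calc |∑ j ∈ Finset.range r, walsh j x| ≤ ∑ j ∈ Finset.range r, |walsh j x| :=
        Finset.abs_sum_le_sum_abs _ _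
    _ ≤ ∑ j ∈ Finset.range r, (1 : ℝ) := Finset.sum_le_sum fun j _ => abs_walsh_le j x
    _ = r := by simp

lemma abs_dirichlet_le {x : G} {k : ℕ} (hk : x k = 1) (m : ℕ) :
    |dirichlet m x| ≤ (2 : ℝ) ^ (k + 1) := by
  have hp : (0 : ℕ) < 2 ^ (k + 1) := by positivity
  have hm : m = 2 ^ (k + 1) * (m / 2 ^ (k + 1)) + m % 2 ^ (k + 1) := (Nat.div_add_mod m _).symm
  rw [hm, dirichlet_split _ (le_of_lt (Nat.mod_lt _ hp)) x, dirichlet_two_pow_mul hk, zero_add,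
      abs_mul]
  calc |walsh (2 ^ (k + 1) * (m / 2 ^ (k + 1))) x| * |dirichlet (m % 2 ^ (k + 1)) x|
      ≤ 1 * ((m % 2 ^ (k + 1) : ℕ) : ℝ) :=
        mul_le_mul (abs_walsh_le _ _) (abs_dirichlet_le_self _ _) (abs_nonneg _) zero_le_one
    _ ≤ (2 : ℝ) ^ (k + 1) := by
        rw [one_mul]
        have := Nat.mod_lt m hp
        calc ((m % 2 ^ (k + 1) : ℕ) : ℝ) ≤ ((2 ^ (k + 1) : ℕ) : ℝ) := by exact_mod_cast this.le
          _ = (2 : ℝ) ^ (k + 1) := by push_cast; ring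

lemma weighted_sum_zero {x : G} {k l : ℕ} (hkl : k < l) (hk : x k = 1) (hl : x l = 1) :
    ∑ j ∈ Finset.range (2 ^ (l + 1)), (j : ℝ) * walsh j x = 0 := by
  have hD : dirichlet (2 ^ l) x = 0 := by
    have e : (2 : ℕ) ^ l = 2 ^ (k + 1) * 2 ^ (l - (k + 1)) := by
      rw [← pow_add]; congr 1; omega
    rw [e]; exact dirichlet_two_pow_mul hk _
  have h2 : (2 : ℕ) ^ (l + 1) = 2 ^ l + 2 ^ l := by ring
  rw [h2, Finset.sum_range_add]
  have hsplit : ∀ j ∈ Finset.range (2 ^ l),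
      ((2 ^ l + j : ℕ) : ℝ) * walsh (2 ^ l + j) x
        = walsh (2 ^ l) x * (((2 : ℝ) ^ l) * walsh j x + (j : ℝ) * walsh j x) := by
    intro j hj
    have hw := walsh_split (s := l) (u := 1) (Finset.mem_range.1 hj) x
    rw [mul_one] at hw
    rw [hw]; push_cast; ring
  rw [Finset.sum_congr rfl hsplit, ← Finset.mul_sum]
  have hsum : ∑ j ∈ Finset.range (2 ^ l),
      (((2 : ℝ) ^ l) * walsh j x + (j : ℝ) * walsh j x)
      = (2 : ℝ) ^ l * dirichlet (2 ^ l) x + ∑ j ∈ Finset.range (2 ^ l), (j : ℝ) * walsh j x := by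
    rw [Finset.sum_add_distrib]
    congr 1
    unfold dirichlet
    rw [Finset.mul_sum]
  rw [hsum, hD, mul_zero, zero_add]
  have hw : walsh (2 ^ l) x = -1 := by
    rw [walsh_two_pow, hl]
    norm_num [show ((1 : ZMod 2)).val = 1 from rfl]
  rw [hw]; ring

lemma sum_dirichlet_identity (x : G) (m : ℕ) :
    (∑ r ∈ Finset.range m, dirichlet r x) + ∑ j ∈ Finset.range m, ((j : ℝ) + 1) * walsh j x
      = (m : ℝ) * dirichlet m x := by
  induction m with
  | zero => simp [dirichlet]
  | succ m ih =>
    rw [Finset.sum_range_succ, Finset.sum_range_succ]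
    have hD : dirichlet (m + 1) x = dirichlet m x + walsh m x := by
      unfold dirichlet; rw [Finset.sum_range_succ]
    rw [hD]
    push_cast
    linear_combination ih

lemma sum_dirichlet_block_zero {x : G} {k l : ℕ} (hkl : k < l) (hk : x k = 1) (hl : x l = 1) :
    ∑ r ∈ Finset.range (2 ^ (l + 1)), dirichlet r x = 0 := by
  have h := sum_dirichlet_identity x (2 ^ (l + 1))
  have hD : dirichlet (2 ^ (l + 1)) x = 0 := dirichlet_two_pow_succ hl
  have hsum1 : ∑ j ∈ Finset.range (2 ^ (l + 1)), ((j : ℝ) + 1) * walsh j x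
      = (∑ j ∈ Finset.range (2 ^ (l + 1)), (j : ℝ) * walsh j x) + dirichlet (2 ^ (l + 1)) x := by
    unfold dirichlet
    rw [← Finset.sum_add_distrib]
    apply Finset.sum_congr rfl
    intros; ring
  rw [hsum1, weighted_sum_zero hkl hk hl, hD, mul_zero, zero_add, add_zero] at h
  exact h

lemma abs_sum_dirichlet_le {x : G} (k l n : ℕ) (hkl : k < l) (hk : x k = 1) (hl : x l = 1) :
    |∑ m ∈ Finset.range n, dirichlet m x| ≤ (2 : ℝ) ^ (l + 1) * 2 ^ (k + 1) := by
  have hq : (0 : ℕ) < 2 ^ (l + 1) := by positivity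
  have hqu : ∀ u : ℕ, dirichlet (2 ^ (l + 1) * u) x = 0 := by
    intro u
    have e : 2 ^ (l + 1) * u = 2 ^ (k + 1) * (2 ^ (l - k) * u) := by
      rw [← mul_assoc, ← pow_add]
      congr 2
      omega
    rw [e]; exact dirichlet_two_pow_mul hk _
  have block : ∀ u : ℕ, ∑ m ∈ Finset.range (2 ^ (l + 1) * u), dirichlet m x = 0 := by
    intro u
    induction u with
    | zero => simp
    | succ u ih =>
      rw [show 2 ^ (l + 1) * (u + 1) = 2 ^ (l + 1) * u + 2 ^ (l + 1) by ring,
          Finset.sum_range_add, ih, zero_add]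
      have he : ∀ r ∈ Finset.range (2 ^ (l + 1)),
          dirichlet (2 ^ (l + 1) * u + r) x = walsh (2 ^ (l + 1) * u) x * dirichlet r x := by
        intro r hr
        rw [dirichlet_split u (le_of_lt (Finset.mem_range.1 hr)) x, hqu, zero_add]
      rw [Finset.sum_congr rfl he, ← Finset.mul_sum, sum_dirichlet_block_zero hkl hk hl, mul_zero]
  have hn : n = 2 ^ (l + 1) * (n / 2 ^ (l + 1)) + n % 2 ^ (l + 1) := (Nat.div_add_mod n _).symm
  rw [hn, Finset.sum_range_add, block, zero_add]
  calc |∑ j ∈ Finset.range (n % 2 ^ (l + 1)),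
          dirichlet (2 ^ (l + 1) * (n / 2 ^ (l + 1)) + j) x|
      ≤ ∑ j ∈ Finset.range (n % 2 ^ (l + 1)),
          |dirichlet (2 ^ (l + 1) * (n / 2 ^ (l + 1)) + j) x| := Finset.abs_sum_le_sum_abs _ _
    _ ≤ ∑ j ∈ Finset.range (n % 2 ^ (l + 1)), (2 : ℝ) ^ (k + 1) := by
        apply Finset.sum_le_sum
        intro j hj
        have hjq : j ≤ 2 ^ (l + 1) := le_of_lt (lt_of_lt_of_le (Finset.mem_range.1 hj)
          (Nat.mod_lt n hq).le)
        rw [dirichlet_split _ hjq x, hqu, zero_add, abs_mul]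
        calc |walsh _ x| * |dirichlet j x| ≤ 1 * (2 : ℝ) ^ (k + 1) :=
              mul_le_mul (abs_walsh_le _ _) (abs_dirichlet_le hk j) (abs_nonneg _) zero_le_one
          _ = (2 : ℝ) ^ (k + 1) := one_mul _
    _ ≤ (2 : ℝ) ^ (l + 1) * 2 ^ (k + 1) := by
        rw [Finset.sum_const, Finset.card_range, nsmul_eq_mul]
        apply mul_le_mul_of_nonneg_right _ (by positivity)
        calc ((n % 2 ^ (l + 1) : ℕ) : ℝ) ≤ ((2 ^ (l + 1) : ℕ) : ℝ) := by
              exact_mod_cast (Nat.mod_lt n hq).le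
          _ = (2 : ℝ) ^ (l + 1) := by push_cast; ring


instance : ContinuousAdd (ZMod 2) := ⟨continuous_of_discreteTopology⟩
instance : ContinuousNeg (ZMod 2) := ⟨continuous_of_discreteTopology⟩
instance : IsTopologicalAddGroup (ZMod 2) := { }

lemma haarG_univ : haarG Set.univ = 1 := by
  have := Measure.addHaarMeasure_self
    (K₀ := (⟨⟨Set.univ, isCompact_univ⟩, by simp⟩ : TopologicalSpace.PositiveCompacts G))
  simpa [haarG] using this

instance : IsFiniteMeasure haarG := by
  constructor
  rw [haarG_univ]
  exact ENNReal.one_lt_top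

instance : haarG.IsAddLeftInvariant := by
  unfold haarG; infer_instance

lemma isClosed_IN (N : ℕ) : IsClosed (IN N) := by
  have h : IN N = ⋂ j ∈ Finset.range N, {t : G | t j = 0} := by
    ext t; simp [IN]
  rw [h]
  exact isClosed_biInter fun j _ => isClosed_eq (continuous_apply j) continuous_const

lemma zmod2_add_eq_zero (a b : ZMod 2) : a + b = 0 ↔ b = a := by revert a b; decide

set_option maxHeartbeats 1000000 in
lemma haarG_IN_mul (N : ℕ) : (2 ^ N : ENNReal) * haarG (IN N) = 1 := by
  classical
  set e : (Fin N → ZMod 2) → G := fun v j => if h : j < N then v ⟨j, h⟩ else 0 with he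
  set A : (Fin N → ZMod 2) → Set G := fun v => (fun t => e v + t) ⁻¹' IN N with hA
  have hmeas : MeasurableSet (IN N) := (isClosed_IN N).measurableSet
  have hAmeas : ∀ v, MeasurableSet (A v) := fun v =>
    hmeas.preimage ((continuous_const.add continuous_id).measurable)
  have hmem : ∀ v t, t ∈ A v ↔ ∀ j, ∀ h : j < N, t j = v ⟨j, h⟩ := by
    intro v t
    simp only [hA, Set.mem_preimage, IN, Set.mem_setOf_eq, Pi.add_apply]
    constructor
    · intro H j h
      have h1 := H j h
      rw [he] at h1
      simp only [h, dif_pos] at h1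
      exact (zmod2_add_eq_zero _ _).1 h1
    · intro H j h
      rw [he]
      simp only [h, dif_pos]
      exact (zmod2_add_eq_zero _ _).2 (H j h)
  have huniv : ⋃ v, A v = Set.univ := by
    apply Set.eq_univ_of_forall
    intro t
    refine Set.mem_iUnion.2 ⟨fun i => t i, (hmem (fun i => t i.val) t).2 ?_⟩
    intro j h
    rfl
  have hdisj : Pairwise (Function.onFun Disjoint A) := by
    intro v w hvw
    rw [Function.onFun, Set.disjoint_left]
    intro t htv htw
    apply hvw
    funext i
    have h1 := (hmem v t).1 htv i i.isLt
    have h2 := (hmem w t).1 htw i i.isLt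
    rw [← Fin.eta i i.isLt, ← h1, h2]
  have h1 : (1 : ENNReal) = ∑' v, haarG (A v) := by
    rw [← haarG_univ, ← huniv, measure_iUnion hdisj hAmeas]
  rw [tsum_fintype] at h1
  have h2 : ∀ v, haarG (A v) = haarG (IN N) := fun v =>
    measure_preimage_add haarG (e v) (IN N)
  simp only [h2, Finset.sum_const, Finset.card_univ, nsmul_eq_mul] at h1
  have hcard : ((Fintype.card (Fin N → ZMod 2) : ℕ) : ENNReal) = 2 ^ N := by
    rw [Fintype.card_fun]
    simp
  rw [hcard] at h1
  exact h1.symm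

lemma haarG_IN_toReal (N : ℕ) : (haarG (IN N)).toReal = ((2 : ℝ) ^ N)⁻¹ := by
  have h := congrArg ENNReal.toReal (haarG_IN_mul N)
  rw [ENNReal.toReal_mul, ENNReal.toReal_one] at h
  have h2 : ((2 : ENNReal) ^ N).toReal = (2 : ℝ) ^ N := by
    rw [ENNReal.toReal_pow]
    norm_num
  rw [h2] at h
  have hpos : (0 : ℝ) < 2 ^ N := by positivity
  field_simp
  linarith [h]

lemma continuous_walsh (n : ℕ) : Continuous (walsh n) := by
  unfold walsh
  apply continuous_finset_prod
  intro i _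
  by_cases h : n.testBit i
  · simp only [h, if_true]
    exact (continuous_of_discreteTopology
      (f := fun a : ZMod 2 => (-1 : ℝ) ^ a.val)).comp (continuous_apply i)
  · simp only [h, if_false]
    exact continuous_const

lemma continuous_dirichlet (m : ℕ) : Continuous (dirichlet m) := by
  unfold dirichlet
  exact continuous_finset_sum _ fun j _ => continuous_walsh j

lemma continuous_fejer (n : ℕ) : Continuous (fejer n) := by
  unfold fejer
  exact continuous_const.mul (continuous_finset_sum _ fun j _ => continuous_dirichlet j)

/-- **Fejér kernel integral estimate (double spike case).** There is an absolute constant `c`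
such that for `0 ≤ k < l ≤ N−1`, `x ∈ I_N(e_k + e_l)` (i.e. `x_k = x_l = 1`, `x_j = 0` for
all other `j < N`), and all `n ≥ 2^N`:
`∫_{I_N} |K_n(x − t)| dμ(t) ≤ c · 2^l · 2^k / (n · 2^N)`. -/
theorem fejer_integral_estimate_double :
    ∃ c : ℝ, 0 < c ∧ ∀ (N n k l : ℕ) (x : G), k < l → l ≤ N - 1 → 2 ^ N ≤ n →
      x k = 1 → x l = 1 → (∀ j < N, j ≠ k → j ≠ l → x j = 0) →
      ∫ t in IN N, |fejer n (x - t)| ∂haarG ≤ c * 2 ^ l * 2 ^ k / ((n : ℝ) * 2 ^ N) := by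
  refine ⟨4, by norm_num, ?_⟩
  intro N n k l x hkl hlN hn hxk hxl _
  have hlt : l < N := by omega
  have hkN : k < N := lt_trans hkl hlt
  have hnpos : 0 < n := lt_of_lt_of_le (by positivity : 0 < 2 ^ N) hn
  have hnR : (0 : ℝ) < n := by exact_mod_cast hnpos
  set C : ℝ := 4 * 2 ^ l * 2 ^ k / n with hC
  have hbound : ∀ t ∈ IN N, |fejer n (x - t)| ≤ C := by
    intro t ht
    have hyk : (x - t) k = 1 := by
      have h0 : t k = 0 := ht k hkN
      simp [Pi.sub_apply, h0, hxk]
    have hyl : (x - t) l = 1 := by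
      have h0 : t l = 0 := ht l hlt
      simp [Pi.sub_apply, h0, hxl]
    unfold fejer
    rw [abs_mul, abs_of_nonneg (by positivity : (0 : ℝ) ≤ 1 / n)]
    have h2 := abs_sum_dirichlet_le k l n hkl hyk hyl (x := x - t)
    calc 1 / (n : ℝ) * |∑ m ∈ Finset.range n, dirichlet m (x - t)|
        ≤ 1 / (n : ℝ) * ((2 : ℝ) ^ (l + 1) * 2 ^ (k + 1)) := by
          apply mul_le_mul_of_nonneg_left h2 (by positivity)
      _ = C := by rw [hC, pow_succ, pow_succ]; ring
  have hcont : Continuous fun t : G => |fejer n (x - t)| :=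
    ((continuous_fejer n).comp (continuous_const.sub continuous_id)).abs
  have hcomp : IsCompact (IN N) := (isClosed_IN N).isCompact
  have hmeas : MeasurableSet (IN N) := (isClosed_IN N).measurableSet
  have hint : IntegrableOn (fun t => |fejer n (x - t)|) (IN N) haarG :=
    hcont.continuousOn.integrableOn_compact hcomp
  have hle : ∫ t in IN N, |fejer n (x - t)| ∂haarG ≤ ∫ _t in IN N, C ∂haarG :=
    setIntegral_mono_on hint (integrableOn_const (measure_ne_top _ _)) hmeas hbound
  rw [setIntegral_const, smul_eq_mul, measureReal_def, haarG_IN_toReal] at hle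
  refine hle.trans (le_of_eq ?_)
  rw [hC]
  have h2N : (0 : ℝ) < 2 ^ N := by positivity
  field_simp
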